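/- Let Δᵀ = ±Δ be invertible, let Ω̃ be an n×n matrix, let R be Δ-symmetric unipotent (φ_Δ(R) = R) and O be Δ-orthogonal unipotent (φ_Δ(O) = O⁻¹), and set A = O·R·Ω̃·R⁻¹·O⁻¹. If A satisfies the self-duality relation A = φ_Δ(A) = Δ·Aᵀ·Δ⁻¹, then R²·Ω̃ = φ_Δ(Ω̃)·R². In particular the Δ-orthogonal factor O drops out of this constraint. -/

import Mathlib

open Matrix

def UnipLT {n : ℕ} {K : Type*} [Field K] (M : Matrix (Fin n) (Fin n) K) : Prop :=
  (∀ i, M i i = 1) ∧ ∀ i j : Fin n, i < j → M i j = 0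

noncomputable def phiD {n : ℕ} {K : Type*} [Field K]
    (Δ M : Matrix (Fin n) (Fin n) K) : Matrix (Fin n) (Fin n) K :=
  Δ * Mᵀ * Δ⁻¹

theorem UnipLT.det_isUnit {n : ℕ} {K : Type*} [Field K] {M : Matrix (Fin n) (Fin n) K}
    (h : UnipLT M) : IsUnit M.det := by
  have : M.det = ∏ i, M i i :=
    Matrix.det_of_lowerTriangular M (fun i j hij => h.2 i j hij)
  simp [this, h.1]

theorem phiD_mul {n : ℕ} {K : Type*} [Field K] (Δ : Matrix (Fin n) (Fin n) K)
    (hdet : IsUnit Δ.det) (M N : Matrix (Fin n) (Fin n) K) :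
    phiD Δ (M * N) = phiD Δ N * phiD Δ M := by
  simp only [phiD, transpose_mul]
  calc Δ * (Nᵀ * Mᵀ) * Δ⁻¹ = Δ * Nᵀ * (Δ⁻¹ * Δ) * Mᵀ * Δ⁻¹ := by
        rw [Matrix.nonsing_inv_mul Δ hdet]; noncomm_ring
    _ = Δ * Nᵀ * Δ⁻¹ * (Δ * Mᵀ * Δ⁻¹) := by noncomm_ring

theorem phiD_inv {n : ℕ} {K : Type*} [Field K] (Δ : Matrix (Fin n) (Fin n) K)
    (hdet : IsUnit Δ.det) (M : Matrix (Fin n) (Fin n) K) :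
    phiD Δ M⁻¹ = (phiD Δ M)⁻¹ := by
  simp only [phiD, transpose_nonsing_inv, Matrix.mul_inv_rev,
    Matrix.nonsing_inv_nonsing_inv Δ hdet, Matrix.mul_assoc]

/-- if A = O·R·Ω̃·R⁻¹·O⁻¹ is self-dual (A = φ_Δ(A)) with R
Δ-symmetric unipotent and O Δ-orthogonal unipotent, then R²·Ω̃ = φ_Δ(Ω̃)·R². -/
theorem selfdual_constraint_on_R {n : ℕ} {K : Type*} [Field K]
    (Δ Ω O R : Matrix (Fin n) (Fin n) K) (hdet : IsUnit Δ.det)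
    (hsym : Δᵀ = Δ ∨ Δᵀ = -Δ)
    (hO : UnipLT O) (hOorth : phiD Δ O = O⁻¹)
    (hR : UnipLT R) (hRsym : phiD Δ R = R)
    (hself : O * R * Ω * R⁻¹ * O⁻¹ = phiD Δ (O * R * Ω * R⁻¹ * O⁻¹)) :
    R ^ 2 * Ω = phiD Δ Ω * R ^ 2 := by
  have hOd := hO.det_isUnit
  have hRd := hR.det_isUnit
  have hOinv : phiD Δ O⁻¹ = O := by
    rw [phiD_inv Δ hdet, hOorth, Matrix.nonsing_inv_nonsing_inv O hOd]
  have hRinv : phiD Δ R⁻¹ = R⁻¹ := by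
    rw [phiD_inv Δ hdet, hRsym]
  have hself' : O * R * Ω * R⁻¹ * O⁻¹ = O * R⁻¹ * phiD Δ Ω * R * O⁻¹ := by
    rw [hself, phiD_mul Δ hdet, phiD_mul Δ hdet, phiD_mul Δ hdet, phiD_mul Δ hdet,
      hOinv, hRinv, hRsym, hOorth]
    noncomm_ring
  have h1 : R * Ω * R⁻¹ = R⁻¹ * phiD Δ Ω * R := by
    have := congrArg (fun X => O⁻¹ * X * O) hself'
    simpa [Matrix.mul_assoc, Matrix.nonsing_inv_mul O hOd, Matrix.mul_nonsing_inv O hOd,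
      Matrix.nonsing_inv_mul_cancel_right O _ hOd, ← Matrix.mul_assoc] using this
  have := congrArg (fun X => R * X * R) h1
  calc R ^ 2 * Ω = R * (R * Ω * R⁻¹) * R := by
        rw [pow_two, Matrix.mul_assoc R (R * Ω * R⁻¹) R, Matrix.mul_assoc (R * Ω) R⁻¹ R,
          Matrix.nonsing_inv_mul R hRd, Matrix.mul_one, Matrix.mul_assoc]
    _ = R * (R⁻¹ * phiD Δ Ω * R) * R := by rw [h1]
    _ = (R * R⁻¹) * phiD Δ Ω * R ^ 2 := by rw [pow_two]; noncomm_ring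
    _ = phiD Δ Ω * R ^ 2 := by rw [Matrix.mul_nonsing_inv R hRd, Matrix.one_mul]
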